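/- The gnomonic map G(x) = (ℓ·Id + 2x·t)/√(ℓ²+r²) and stereographic map H(x) = ((ℓ²-r²)Id + 4ℓ x·t)/(ℓ²+r²), defined for x ∈ ℝ^{1,2} with r² = (x⁰)² - (x¹)² - (x²)² > -ℓ², satisfy H = G² and both take values in SU(1,1). -/
import Mathlib


open Complex Matrix

noncomputable def τ1 : Matrix (Fin 2) (Fin 2) ℂ := !![0, 1; 1, 0]
noncomputable def τ2 : Matrix (Fin 2) (Fin 2) ℂ := !![0, -Complex.I; Complex.I, 0]
noncomputable def τ3 : Matrix (Fin 2) (Fin 2) ℂ := !![1, 0; 0, -1]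

noncomputable def tgen : Fin 3 → Matrix (Fin 2) (Fin 2) ℂ :=
  ![(Complex.I / 2) • τ3, (-(1 : ℂ) / 2) • τ2, ((1 : ℂ) / 2) • τ1]

/-- x·t = x⁰t₀ + x¹t₁ + x²t₂. -/
noncomputable def xdott (x : Fin 3 → ℝ) : Matrix (Fin 2) (Fin 2) ℂ :=
  ∑ i, ((x i : ℝ) : ℂ) • tgen i

/-- Lorentzian length squared r² = (x⁰)² - (x¹)² - (x²)². -/
def r2 (x : Fin 3 → ℝ) : ℝ := x 0 ^ 2 - x 1 ^ 2 - x 2 ^ 2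

/-- The gnomonic map G(x) = (ℓ·Id + 2x·t)/√(ℓ²+r²). -/
noncomputable def Gmap (ℓ : ℝ) (x : Fin 3 → ℝ) : Matrix (Fin 2) (Fin 2) ℂ :=
  (((1 / Real.sqrt (ℓ ^ 2 + r2 x) : ℝ) : ℂ)) • ((ℓ : ℂ) • (1 : Matrix (Fin 2) (Fin 2) ℂ) +
    (2 : ℂ) • xdott x)

/-- The stereographic map H(x) = ((ℓ²-r²)·Id + 4ℓx·t)/(ℓ²+r²). -/
noncomputable def Hmap (ℓ : ℝ) (x : Fin 3 → ℝ) : Matrix (Fin 2) (Fin 2) ℂ :=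
  (((1 / (ℓ ^ 2 + r2 x) : ℝ) : ℂ)) • (((ℓ ^ 2 - r2 x : ℝ) : ℂ) • (1 : Matrix (Fin 2) (Fin 2) ℂ) +
    ((4 * ℓ : ℝ) : ℂ) • xdott x)

lemma Gmap_eq (ℓ : ℝ) (x : Fin 3 → ℝ) :
    Gmap ℓ x = (((1 / Real.sqrt (ℓ ^ 2 + r2 x) : ℝ) : ℂ)) •
      !![(ℓ : ℂ) + x 0 * Complex.I, (x 2 : ℂ) + x 1 * Complex.I;
         (x 2 : ℂ) - x 1 * Complex.I, (ℓ : ℂ) - x 0 * Complex.I] := by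
  ext i j
  fin_cases i <;> fin_cases j <;>
    simp [Gmap, xdott, tgen, τ1, τ2, τ3, Fin.sum_univ_three, Matrix.one_apply] <;> ring_nf <;> tauto

lemma Hmap_eq (ℓ : ℝ) (x : Fin 3 → ℝ) :
    Hmap ℓ x = (((1 / (ℓ ^ 2 + r2 x) : ℝ) : ℂ)) •
      !![((ℓ ^ 2 - r2 x : ℝ) : ℂ) + 2 * ℓ * x 0 * Complex.I,
         2 * ℓ * ((x 2 : ℂ) + x 1 * Complex.I);
         2 * ℓ * ((x 2 : ℂ) - x 1 * Complex.I),
         ((ℓ ^ 2 - r2 x : ℝ) : ℂ) - 2 * ℓ * x 0 * Complex.I] := by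
  ext i j
  fin_cases i <;> fin_cases j <;>
    simp [Hmap, xdott, tgen, τ1, τ2, τ3, Fin.sum_univ_three, Matrix.one_apply] <;> push_cast <;> ring_nf <;> tauto

/-- On I_ℓ = {x : r² > -ℓ²}, the gnomonic and stereographic maps satisfy H = G² and
both take values in SU(1,1). -/
theorem gnomonic_stereographic_maps (ℓ : ℝ) (hℓ : 0 < ℓ) :
    ∀ x : Fin 3 → ℝ, r2 x > -ℓ ^ 2 →
      Hmap ℓ x = Gmap ℓ x * Gmap ℓ x ∧
      (Gmap ℓ x * τ3 * (Gmap ℓ x)ᴴ = τ3 ∧ (Gmap ℓ x).det = 1) ∧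
      (Hmap ℓ x * τ3 * (Hmap ℓ x)ᴴ = τ3 ∧ (Hmap ℓ x).det = 1) := by
  intro x hx
  have ha : (0:ℝ) < ℓ ^ 2 + r2 x := by nlinarith
  have ha0 : (ℓ ^ 2 + r2 x : ℝ) ≠ 0 := ne_of_gt ha
  have hs0 : Real.sqrt (ℓ ^ 2 + r2 x) ≠ 0 := ne_of_gt (Real.sqrt_pos.2 ha)
  have hss : Real.sqrt (ℓ ^ 2 + r2 x) * Real.sqrt (ℓ ^ 2 + r2 x) = ℓ ^ 2 + r2 x :=
    Real.mul_self_sqrt ha.le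
  have key : (((1 / Real.sqrt (ℓ ^ 2 + r2 x) : ℝ) : ℂ)) * (((1 / Real.sqrt (ℓ ^ 2 + r2 x) : ℝ) : ℂ))
      = (((1 / (ℓ ^ 2 + r2 x) : ℝ) : ℂ)) := by
    norm_cast
    rw [div_mul_div_comm, one_mul, hss]
  have key2 : (((1 / (ℓ ^ 2 + r2 x) : ℝ) : ℂ)) * ((ℓ ^ 2 + r2 x : ℝ) : ℂ) = 1 := by
    norm_cast
    field_simp
  have hMG : (!![(ℓ : ℂ) + x 0 * Complex.I, (x 2 : ℂ) + x 1 * Complex.I;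
         (x 2 : ℂ) - x 1 * Complex.I, (ℓ : ℂ) - x 0 * Complex.I]) * τ3 *
      (!![(ℓ : ℂ) + x 0 * Complex.I, (x 2 : ℂ) + x 1 * Complex.I;
         (x 2 : ℂ) - x 1 * Complex.I, (ℓ : ℂ) - x 0 * Complex.I])ᴴ
      = ((ℓ ^ 2 + r2 x : ℝ) : ℂ) • τ3 := by
    ext i j
    fin_cases i <;> fin_cases j <;>
      simp [Matrix.mul_apply, Matrix.conjTranspose_apply, Fin.sum_univ_two, τ3, r2,
        map_add, map_sub, _root_.map_mul, Complex.conj_ofReal, Complex.conj_I, map_ofNat] <;> push_cast <;> ring_nf <;> simp [Complex.I_sq] <;> ring_nf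
  have hMH : (!![((ℓ ^ 2 - r2 x : ℝ) : ℂ) + 2 * ℓ * x 0 * Complex.I,
         2 * ℓ * ((x 2 : ℂ) + x 1 * Complex.I);
         2 * ℓ * ((x 2 : ℂ) - x 1 * Complex.I),
         ((ℓ ^ 2 - r2 x : ℝ) : ℂ) - 2 * ℓ * x 0 * Complex.I]) * τ3 *
      (!![((ℓ ^ 2 - r2 x : ℝ) : ℂ) + 2 * ℓ * x 0 * Complex.I,
         2 * ℓ * ((x 2 : ℂ) + x 1 * Complex.I);
         2 * ℓ * ((x 2 : ℂ) - x 1 * Complex.I),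
         ((ℓ ^ 2 - r2 x : ℝ) : ℂ) - 2 * ℓ * x 0 * Complex.I])ᴴ
      = (((ℓ ^ 2 + r2 x : ℝ) : ℂ) * ((ℓ ^ 2 + r2 x : ℝ) : ℂ)) • τ3 := by
    ext i j
    fin_cases i <;> fin_cases j <;>
      simp [Matrix.mul_apply, Matrix.conjTranspose_apply, Fin.sum_univ_two, τ3, r2,
        map_add, map_sub, _root_.map_mul, Complex.conj_ofReal, Complex.conj_I, map_ofNat] <;> push_cast <;> ring_nf <;> simp [Complex.I_sq] <;> ring_nf
  refine ⟨?_, ⟨?_, ?_⟩, ⟨?_, ?_⟩⟩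
  · rw [Gmap_eq, Hmap_eq, Matrix.smul_mul, Matrix.mul_smul, smul_smul, key]
    congr 1
    ext i j
    fin_cases i <;> fin_cases j <;>
      simp [Matrix.mul_apply, Fin.sum_univ_two, r2, Complex.I_sq] <;> push_cast <;> ring_nf <;> simp [Complex.I_sq] <;> ring_nf
  · rw [Gmap_eq]
    simp only [Matrix.conjTranspose_smul, Matrix.smul_mul, Matrix.mul_smul, smul_smul, hMG,
      Complex.star_def, Complex.conj_ofReal]
    rw [show (((1 / Real.sqrt (ℓ ^ 2 + r2 x) : ℝ) : ℂ)) *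
        ((((1 / Real.sqrt (ℓ ^ 2 + r2 x) : ℝ) : ℂ)) * ((ℓ ^ 2 + r2 x : ℝ) : ℂ)) = 1 from by
      rw [← mul_assoc, key, key2], one_smul]
  · rw [Gmap_eq, Matrix.det_smul, Matrix.det_fin_two_of]
    have : (((ℓ : ℂ) + x 0 * Complex.I) * ((ℓ : ℂ) - x 0 * Complex.I) -
        ((x 2 : ℂ) + x 1 * Complex.I) * ((x 2 : ℂ) - x 1 * Complex.I))
        = ((ℓ ^ 2 + r2 x : ℝ) : ℂ) := by
      push_cast [r2]; ring_nf; simp [Complex.I_sq]; ring_nf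
    rw [this]
    simp only [Fintype.card_fin]
    rw [show (((1 / Real.sqrt (ℓ ^ 2 + r2 x) : ℝ) : ℂ)) ^ 2 =
      (((1 / (ℓ ^ 2 + r2 x) : ℝ) : ℂ)) from by rw [sq, key]]
    exact key2
  · rw [Hmap_eq]
    simp only [Matrix.conjTranspose_smul, Matrix.smul_mul, Matrix.mul_smul, smul_smul, hMH,
      Complex.star_def, Complex.conj_ofReal]
    rw [show (((1 / (ℓ ^ 2 + r2 x) : ℝ) : ℂ)) *
        ((((1 / (ℓ ^ 2 + r2 x) : ℝ) : ℂ)) *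
          (((ℓ ^ 2 + r2 x : ℝ) : ℂ) * ((ℓ ^ 2 + r2 x : ℝ) : ℂ))) = 1 from by
      rw [← mul_assoc, mul_mul_mul_comm, key2, one_mul], one_smul]
  · rw [Hmap_eq, Matrix.det_smul, Matrix.det_fin_two_of]
    have : ((((ℓ ^ 2 - r2 x : ℝ) : ℂ) + 2 * ℓ * x 0 * Complex.I) *
        (((ℓ ^ 2 - r2 x : ℝ) : ℂ) - 2 * ℓ * x 0 * Complex.I) -
        2 * ℓ * ((x 2 : ℂ) + x 1 * Complex.I) * (2 * ℓ * ((x 2 : ℂ) - x 1 * Complex.I)))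
        = ((ℓ ^ 2 + r2 x : ℝ) : ℂ) * ((ℓ ^ 2 + r2 x : ℝ) : ℂ) := by
      push_cast [r2]; ring_nf; simp [Complex.I_sq]; ring_nf
    rw [this]
    simp only [Fintype.card_fin]
    have haC : ((ℓ ^ 2 + r2 x : ℝ) : ℂ) ≠ 0 := Complex.ofReal_ne_zero.2 ha0
    rw [show (((1 / (ℓ ^ 2 + r2 x) : ℝ) : ℂ)) ^ 2 * (((ℓ ^ 2 + r2 x : ℝ) : ℂ) * ((ℓ ^ 2 + r2 x : ℝ) : ℂ)) = ((((ℓ ^ 2 + r2 x : ℝ) : ℂ)) / (((ℓ ^ 2 + r2 x : ℝ) : ℂ))) * ((((ℓ ^ 2 + r2 x : ℝ) : ℂ)) / (((ℓ ^ 2 + r2 x : ℝ) : ℂ))) from by push_cast; ring, div_self haC, one_mul]
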